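/- If ν : I_N^* × I_N^* → ℝ is nonnegative with zero diagonal, satisfies (G1) (for every k ∈ I_N^*, ∑_{i∈I_N^*} ν_{i,k} − ∑_{j∈I_N^*} ν_{k,j} = 1 if k = *, = −1 if k = 0, and = 0 otherwise), and satisfies the sparsity condition (relaxed-g) (ν_{i,j} = 0 for every (i,j) not of the form (k,k+1) with 0 ≤ k ≤ N−1, (N,k) with 0 ≤ k ≤ N−1, or (N,*)), then there exists a nonnegative λ : I_N^* × I_N^* → ℝ with zero diagonal satisfying (F1) (for every k ∈ I_N^*, ∑_{i∈I_N^*} λ_{i,k} − ∑_{j∈I_N^*} λ_{k,j} = 1 if k = N, = −1 if k = *, and = 0 otherwise) and the sparsity condition (relaxed-f) (λ_{i,j} = 0 for every (i,j) not of the form (k,k+1) with 0 ≤ k ≤ N−1 or (*,k) with 0 ≤ k ≤ N), such that for all points x_0, x_0^+,…,x_N^+, x_*^+, y_0, y_0^+,…,y_N^+, y_*^+ ∈ ℝ^d, condition (X_λ) holds if and only if condition (Y_ν) holds. -/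

import Mathlib

open Finset
open scoped RealInnerProductSpace

noncomputable section

/-- `ℝ^d` with the Euclidean structure. -/
abbrev Vec (d : ℕ) := EuclideanSpace ℝ (Fin d)

/-- The index set `I_N^* = {0, …, N} ∪ {*}`; `some k` is the numeric index `k`,
`none` is the index `*`. -/
abbrev Idx (N : ℕ) := Option (Fin (N + 1))

/-- The interpolation-inequality quantity
`Φ_{i,j} = f_j − f_i + ⟪g_j, p_i − p_j⟫ + (1/(2L))‖g_i − g_j‖²
  + (μL/(2(L−μ)))‖p_i − p_j − (1/L)(g_i − g_j)‖²`. -/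
def Phi {d : ℕ} {ι : Type*} (L μ : ℝ) (p g : ι → Vec d) (f : ι → ℝ) (i j : ι) : ℝ :=
  f j - f i + ⟪g j, p i - p j⟫ + 1 / (2 * L) * ‖g i - g j‖ ^ 2
    + μ * L / (2 * (L - μ)) * ‖p i - p j - (1 / L) • (g i - g j)‖ ^ 2

/-- `x_0, …, x_N` are generated by the algorithm given by the `N × N` matrix `M` from
`g_0, …, g_{N−1}`: `x_{k+1} − x_k = −(1/L) ∑_{j=0}^{k} M_{k+1,j+1} g_j` (1-indexed matrix
entries). -/
def GenBy {d N : ℕ} (L : ℝ) (M : Matrix (Fin N) (Fin N) ℝ)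
    (x g : Fin (N + 1) → Vec d) : Prop :=
  ∀ k : Fin N, x k.succ - x k.castSucc =
    -(1 / L) • ∑ j : Fin N, (if (j : ℕ) ≤ (k : ℕ) then M k j • g j.castSucc else 0)

/-- Anti-diagonal transpose of a square matrix: `(Mᴬ)_{i,j} = M_{n+1−j, n+1−i}`. -/
def antiT {n : ℕ} (M : Matrix (Fin n) (Fin n) ℝ) : Matrix (Fin n) (Fin n) ℝ :=
  fun i j => M j.rev i.rev

/-- The `(N+1) × (N+1)` matrix `H̃` associated with the `N × N` lower-triangular matrix
`H`: `H̃_{1,1} = 1` and, for `2 ≤ i ≤ N+1`, `H̃_{i,j} = H_{i−1,j}` for `j ≤ i−2`,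
`H̃_{i,i−1} = H_{i−1,i−1} − 1`, `H̃_{i,i} = 1` (1-indexed). -/
def Htilde {N : ℕ} (H : Matrix (Fin N) (Fin N) ℝ) :
    Matrix (Fin (N + 1)) (Fin (N + 1)) ℝ :=
  fun i j =>
    if (i : ℕ) = (j : ℕ) then 1
    else if h2 : (j : ℕ) + 1 = (i : ℕ) then
      H ⟨(j : ℕ), by have := i.isLt; omega⟩ ⟨(j : ℕ), by have := i.isLt; omega⟩ - 1
    else if h3 : (j : ℕ) + 1 < (i : ℕ) then
      H ⟨(i : ℕ) - 1, by have := i.isLt; omega⟩ ⟨(j : ℕ), by have := i.isLt; omega⟩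
    else 0

/-- The tuple of consecutive differences `(p_0^+ − base, p_1^+ − p_0^+, …, p_N^+ − p_{N−1}^+)`
built from a base point and the numeric entries of `p : I_N^* → ℝ^d`. -/
def dvec {d N : ℕ} (base : Vec d) (p : Idx N → Vec d) : Fin (N + 1) → Vec d :=
  fun i =>
    if (i : ℕ) = 0 then p (some 0) - base
    else p (some i) - p (some ⟨(i : ℕ) - 1, by have := i.isLt; omega⟩)

/-- The quantity `S` of the dual PEP analysis:
`S = −L⟪H̃⁻¹x, Ty⟫ + (L/2)‖y_0 − (y_0^+ + y_*^+)/2 − (x_N^+ − x_*^+)/2‖²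
 − (μL/(L−μ))[∑_{k=1}^{N} ⟪y_k^+ − y_{k−1}^+, x_{N−k}^+⟫ + ⟪(y_0^+ + y_*^+)/2 − y_N^+, x_*^+⟫
 + ⟪(y_0^+ − y_*^+)/2, x_N^+⟫]`. -/
def Squant {d N : ℕ} (L μ : ℝ) (H : Matrix (Fin N) (Fin N) ℝ)
    (x0 y0 : Vec d) (xp yp : Idx N → Vec d) : ℝ :=
  -L * (∑ i : Fin (N + 1),
      ⟪∑ j : Fin (N + 1), (Htilde H)⁻¹ i j • dvec x0 xp j, dvec y0 yp i.rev⟫)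
  + L / 2 * ‖y0 - (1 / 2 : ℝ) • (yp (some 0) + yp none)
      - (1 / 2 : ℝ) • (xp (some (Fin.last N)) - xp none)‖ ^ 2
  - μ * L / (L - μ) *
      ((∑ k : Fin N, ⟪yp (some k.succ) - yp (some k.castSucc), xp (some k.rev.castSucc)⟫)
        + ⟪(1 / 2 : ℝ) • (yp (some 0) + yp none) - yp (some (Fin.last N)), xp none⟫
        + ⟪(1 / 2 : ℝ) • (yp (some 0) - yp none), xp (some (Fin.last N))⟫)

/-- Condition `(X_λ)`:
`y_k^+ − y_{k−1}^+ = ∑_{i∈I_N^*} λ_{i,N−k}(x_i^+ − x_{N−k}^+)` for `k = 1, …, N`, and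
`(y_0^+ + y_*^+)/2 − y_N^+ = (x_N^+ − x_*^+)/2 + ∑_{i∈I_N^*} λ_{i,*}(x_i^+ − x_*^+)`. -/
def CondX {d N : ℕ} (lam : Idx N → Idx N → ℝ) (xp yp : Idx N → Vec d) : Prop :=
  (∀ k : Fin N, yp (some k.succ) - yp (some k.castSucc) =
      ∑ i : Idx N, lam i (some k.rev.castSucc) • (xp i - xp (some k.rev.castSucc))) ∧
  (1 / 2 : ℝ) • (yp (some 0) + yp none) - yp (some (Fin.last N)) =
      (1 / 2 : ℝ) • (xp (some (Fin.last N)) - xp none)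
        + ∑ i : Idx N, lam i none • (xp i - xp none)

/-- Condition `(Y_ν)`:
`x_k^+ − x_{k−1}^+ = ∑_{i∈I_N^*} ν_{i,N−k}(y_i^+ − y_{N−k}^+)` for `k = 1, …, N−1`,
`x_0^+ − x_*^+ = ∑_{i∈I_N^*} ν_{i,N}(y_i^+ − y_N^+)`, and
`(x_*^+ − x_N^+)/2 = (y_*^+ − y_0^+)/2 + ∑_{i∈I_N^*} ν_{i,*}(y_i^+ − y_*^+)`. -/
def CondY {d N : ℕ} (nu : Idx N → Idx N → ℝ) (xp yp : Idx N → Vec d) : Prop :=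
  (∀ k : Fin N, (k : ℕ) + 1 < N →
      xp (some k.succ) - xp (some k.castSucc) =
        ∑ i : Idx N, nu i (some k.rev.castSucc) • (yp i - yp (some k.rev.castSucc))) ∧
  (xp (some 0) - xp none =
      ∑ i : Idx N, nu i (some (Fin.last N)) • (yp i - yp (some (Fin.last N)))) ∧
  (1 / 2 : ℝ) • (xp none - xp (some (Fin.last N))) =
      (1 / 2 : ℝ) • (yp none - yp (some 0)) + ∑ i : Idx N, nu i none • (yp i - yp none)

/-- `(F1)`: `∑_i λ_{i,k} − ∑_j λ_{k,j}` equals `1` for `k = N`, `−1` for `k = *`, and `0`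
otherwise. -/
def CondF1 {N : ℕ} (lam : Idx N → Idx N → ℝ) : Prop :=
  ∀ k : Idx N, (∑ i : Idx N, lam i k) - ∑ j : Idx N, lam k j =
    if k = some (Fin.last N) then 1 else if k = none then -1 else 0

/-- `(G1)`: `∑_i ν_{i,k} − ∑_j ν_{k,j}` equals `1` for `k = *`, `−1` for `k = 0`, and `0`
otherwise. -/
def CondG1 {N : ℕ} (nu : Idx N → Idx N → ℝ) : Prop :=
  ∀ k : Idx N, (∑ i : Idx N, nu i k) - ∑ j : Idx N, nu k j =
    if k = none then 1 else if k = some 0 then -1 else 0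

/-- The sparsity pattern `(relaxed-f)`: the allowed pairs `(k, k+1)` for `0 ≤ k ≤ N−1` and
`(*, k)` for `0 ≤ k ≤ N`. -/
def RelF (N : ℕ) (i j : Idx N) : Prop :=
  (∃ k : Fin N, i = some k.castSucc ∧ j = some k.succ) ∨
  (∃ k : Fin (N + 1), i = none ∧ j = some k)

/-- The sparsity pattern `(relaxed-g)`: the allowed pairs `(k, k+1)` and `(N, k)` for
`0 ≤ k ≤ N−1` and `(N, *)`. -/
def RelG (N : ℕ) (i j : Idx N) : Prop :=
  (∃ k : Fin N, i = some k.castSucc ∧ j = some k.succ) ∨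
  (∃ k : Fin N, i = some (Fin.last N) ∧ j = some k.castSucc) ∨
  (i = some (Fin.last N) ∧ j = none)

/-- The sparsity pattern `(d1-tau)`: the allowed pairs `(k, k+1)`, `(k+1, k)`, `(N, k)` for
`0 ≤ k ≤ N−1` and `(N, *)`. -/
def RelD (N : ℕ) (i j : Idx N) : Prop :=
  (∃ k : Fin N, i = some k.castSucc ∧ j = some k.succ) ∨
  (∃ k : Fin N, i = some k.succ ∧ j = some k.castSucc) ∨
  (∃ k : Fin N, i = some (Fin.last N) ∧ j = some k.castSucc) ∨
  (i = some (Fin.last N) ∧ j = none)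

end


noncomputable section RXsec
namespace RX

variable {N : ℕ} (nu : Idx N → Idx N → ℝ)

def aseq : ℕ → ℝ :=
  fun k => if h : k < N then nu (some ⟨k, by omega⟩) (some ⟨k + 1, by omega⟩) else 1

def bseq : ℕ → ℝ :=
  fun k => if h : k < N then nu (some (Fin.last N)) (some ⟨k, by omega⟩) else 0

def Pf : ℕ → ℝ :=
  fun j => if j = 0 then 1 else if j ≤ N then 1 / aseq nu (j - 1) else 0

def lamOf : Idx N → Idx N → ℝ := fun i j =>
  match i, j with
  | _, none => 0
  | some i', some j' => if (i' : ℕ) + 1 = (j' : ℕ) then Pf nu (N - (i' : ℕ)) else 0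
  | none, some j' => Pf nu (N - (j' : ℕ)) - Pf nu (N - (j' : ℕ) + 1)

lemma lam_none (i : Idx N) : lamOf nu i none = 0 := by cases i <;> rfl

variable (hsp : ∀ i j : Idx N, ¬ RelG N i j → nu i j = 0)
    (hdiag : ∀ i, nu i i = 0)

section ZeroLemmas
include hsp

lemma nu_none_row (j : Idx N) : nu none j = 0 := by
  apply hsp
  rintro (⟨k, h, -⟩ | ⟨k, h, -⟩ | ⟨h, -⟩) <;> exact nomatch h

lemma nu_some_none (i : Fin (N + 1)) (hi : (i : ℕ) ≠ N) : nu (some i) none = 0 := by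
  apply hsp
  rintro (⟨k, -, h⟩ | ⟨k, -, h⟩ | ⟨h, -⟩)
  · exact nomatch h
  · exact nomatch h
  · rw [Option.some_inj] at h; subst h; exact hi (by simp)

lemma nu_some_some (i j : Fin (N + 1)) (h1 : (i : ℕ) + 1 ≠ (j : ℕ))
    (h2 : (i : ℕ) = N → ¬ (j : ℕ) < N) : nu (some i) (some j) = 0 := by
  apply hsp
  rintro (⟨k, ha, hb⟩ | ⟨k, ha, hb⟩ | ⟨ha, hb⟩)
  · rw [Option.some_inj] at ha hb; subst ha; subst hb; exact h1 (by simp)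
  · rw [Option.some_inj] at ha hb; subst ha; subst hb
    exact h2 (by simp) (by simpa using k.isLt)
  · exact nomatch hb

end ZeroLemmas

section Sums
variable {M : Type*} [AddCommGroup M] [Module ℝ M]

lemma sum_lam_col (m : Fin (N + 1)) (v : Idx N → M) :
    ∑ i : Idx N, lamOf nu i (some m) • v i =
      (Pf nu (N - (m : ℕ)) - Pf nu (N - (m : ℕ) + 1)) • v none +
      (if h : 1 ≤ (m : ℕ) then
        Pf nu (N - (m : ℕ) + 1) • v (some ⟨(m : ℕ) - 1, by omega⟩) else 0) := by
  rw [Fintype.sum_option]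
  congr 1
  split
  next h =>
    rw [Finset.sum_eq_single (⟨(m : ℕ) - 1, by omega⟩ : Fin (N + 1))]
    · simp only [lamOf]
      rw [if_pos (by omega)]
      congr 2
      omega
    · intro i _ hi
      have hne : ¬((i : ℕ) + 1 = (m : ℕ)) := fun hc => hi (Fin.ext (by simp; omega))
      simp only [lamOf, if_neg hne, zero_smul]
    · intro h; exact absurd (Finset.mem_univ _) h
  next h =>
    apply Finset.sum_eq_zero
    intro i _
    have hne : ¬((i : ℕ) + 1 = (m : ℕ)) := by omega
    simp only [lamOf, if_neg hne, zero_smul]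

lemma sum_lam_col' (t : ℕ) (m : Fin (N + 1)) (hm : (m : ℕ) = t) (v : Idx N → M) :
    ∑ i : Idx N, lamOf nu i (some m) • v i =
      (Pf nu (N - t) - Pf nu (N - t + 1)) • v none +
      (if h : 1 ≤ t then Pf nu (N - t + 1) • v (some ⟨t - 1, by omega⟩) else 0) := by
  subst hm; exact sum_lam_col nu m v

lemma sum_lam_col2 (t t1 : ℕ) (m : Fin (N + 1)) (hm : (m : ℕ) = t) (ht1 : t1 + 1 = t)
    (v : Idx N → M) :
    ∑ i : Idx N, lamOf nu i (some m) • v i =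
      (Pf nu (N - t) - Pf nu (N - t + 1)) • v none +
      Pf nu (N - t + 1) • v (some ⟨t1, by omega⟩) := by
  rw [sum_lam_col' nu t m hm v, dif_pos (by omega)]
  congr 3
  simp only [Option.some.injEq, Fin.mk.injEq]
  omega

include hsp in
lemma sum_nu_col (m : Fin (N + 1)) (hm : (m : ℕ) < N) (v : Idx N → M) :
    ∑ i : Idx N, nu i (some m) • v i =
      bseq nu (m : ℕ) • v (some (Fin.last N)) +
      (if h : 1 ≤ (m : ℕ) then
        aseq nu ((m : ℕ) - 1) • v (some ⟨(m : ℕ) - 1, by omega⟩) else 0) := by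
  rw [Fintype.sum_option, nu_none_row nu hsp, zero_smul, zero_add]
  split
  next h =>
    rw [Finset.sum_eq_add_of_mem (Fin.last N) (⟨(m : ℕ) - 1, by omega⟩ : Fin (N + 1))
      (Finset.mem_univ _) (Finset.mem_univ _) (by apply Fin.ne_of_val_ne; simp; omega)]
    · congr 2
      · rw [bseq, dif_pos hm]
      · rw [aseq, dif_pos (show (m : ℕ) - 1 < N by omega)]
        congr 2
        exact Fin.ext (by simp; omega)
    · intro i _ ⟨hi1, hi2⟩
      rw [nu_some_some nu hsp _ _ (fun hc => hi2 (Fin.ext (by simp; omega)))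
        (fun hc _ => hi1 (Fin.ext (by simp [hc]))), zero_smul]
  next h =>
    rw [add_zero]
    rw [Finset.sum_eq_single (Fin.last N)]
    · congr 1; rw [bseq, dif_pos hm]
    · intro i _ hi
      rw [nu_some_some nu hsp _ _ (by omega) (fun hc => absurd (Fin.ext hc) hi), zero_smul]
    · intro h; exact absurd (Finset.mem_univ _) h

include hsp in
lemma sum_nu_col' (t : ℕ) (m : Fin (N + 1)) (hm : (m : ℕ) = t) (ht : t < N) (v : Idx N → M) :
    ∑ i : Idx N, nu i (some m) • v i =
      bseq nu t • v (some (Fin.last N)) +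
      (if h : 1 ≤ t then aseq nu (t - 1) • v (some ⟨t - 1, by omega⟩) else 0) := by
  subst hm; exact sum_nu_col nu hsp m ht v

include hsp in
lemma sum_nu_col2 (t t1 : ℕ) (m : Fin (N + 1)) (hm : (m : ℕ) = t) (ht1 : t1 + 1 = t)
    (ht : t < N) (v : Idx N → M) :
    ∑ i : Idx N, nu i (some m) • v i =
      bseq nu t • v (some (Fin.last N)) + aseq nu t1 • v (some ⟨t1, by omega⟩) := by
  rw [sum_nu_col' nu hsp t m hm ht v, dif_pos (by omega)]
  congr 3
  · omega
  · simp only [Option.some.injEq, Fin.mk.injEq]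
    omega

include hsp hdiag in
lemma sum_nu_colN (hN : 1 ≤ N) (v : Idx N → M) :
    ∑ i : Idx N, nu i (some (Fin.last N)) • v i =
      aseq nu (N - 1) • v (some ⟨N - 1, by omega⟩) := by
  rw [Fintype.sum_option, nu_none_row nu hsp, zero_smul, zero_add]
  rw [Finset.sum_eq_single (⟨N - 1, by omega⟩ : Fin (N + 1))]
  · congr 1
    rw [aseq, dif_pos (show N - 1 < N by omega)]
    congr 2
    exact Fin.ext (by simp [Fin.last]; omega)
  · intro i _ hi
    rcases eq_or_ne i (Fin.last N) with rfl | hne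
    · rw [hdiag, zero_smul]
    · rw [nu_some_some nu hsp _ _ ?_ (fun hc _ => hne (Fin.ext (by simp [hc]))), zero_smul]
      have h1 : (i : ℕ) ≠ N - 1 := fun hc => hi (Fin.ext (by simp; omega))
      have h2 : (i : ℕ) ≠ N := fun hc => hne (Fin.ext (by simp [hc]))
      simp [Fin.last]; omega
  · intro h; exact absurd (Finset.mem_univ _) h

include hsp hdiag in
lemma sum_nu_colstar (v : Idx N → M) :
    ∑ i : Idx N, nu i none • v i =
      nu (some (Fin.last N)) none • v (some (Fin.last N)) := by
  rw [Fintype.sum_option, hdiag, zero_smul, zero_add]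
  rw [Finset.sum_eq_single (Fin.last N)]
  · intro i _ hi
    rw [nu_some_none nu hsp _ (fun hc => hi (Fin.ext (by simp [hc]))), zero_smul]
  · intro h; exact absurd (Finset.mem_univ _) h

end Sums

include hsp in
lemma sum_nu_row (m : Fin (N + 1)) (hm : (m : ℕ) < N) :
    ∑ j : Idx N, nu (some m) j = aseq nu (m : ℕ) := by
  rw [Fintype.sum_option, nu_some_none nu hsp _ (by omega), zero_add]
  rw [Finset.sum_eq_single (⟨(m : ℕ) + 1, by omega⟩ : Fin (N + 1))]
  · rw [aseq, dif_pos hm]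
  · intro j _ hj
    apply nu_some_some nu hsp
    · intro hc; exact hj (Fin.ext (by simp; omega))
    · intro hc; omega
  · intro h; exact absurd (Finset.mem_univ _) h

variable (hG1 : CondG1 nu) (hnn : ∀ i j, 0 ≤ nu i j)

include hsp hdiag hG1 in
lemma c_eq_one : nu (some (Fin.last N)) none = 1 := by
  have h := hG1 none
  rw [if_pos rfl] at h
  have h2 : ∑ j : Idx N, nu none j = 0 :=
    Finset.sum_eq_zero (fun j _ => nu_none_row nu hsp j)
  have h3 : ∑ i : Idx N, nu i none = nu (some (Fin.last N)) none := by
    have := sum_nu_colstar nu hsp hdiag (M := ℝ) (fun _ => 1)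
    simpa [smul_eq_mul] using this
  rw [h2, h3, sub_zero] at h
  exact h

include hsp hG1 in
lemma K2 (hN : 1 ≤ N) : aseq nu 0 = bseq nu 0 + 1 := by
  have h := hG1 (some 0)
  rw [if_neg (by simp), if_pos rfl] at h
  have hcol : ∑ i : Idx N, nu i (some 0) = bseq nu 0 := by
    have := sum_nu_col nu hsp (0 : Fin (N + 1)) (by simp; omega) (M := ℝ) (fun _ => 1)
    simpa [smul_eq_mul] using this
  have hrow := sum_nu_row nu hsp (0 : Fin (N + 1)) (by simp; omega)
  rw [hcol, hrow] at h
  simp only [Fin.val_zero] at h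
  linarith

include hsp hG1 in
lemma K3 (m : ℕ) (hm : m + 1 < N) : aseq nu (m + 1) = aseq nu m + bseq nu (m + 1) := by
  have h := hG1 (some ⟨m + 1, by omega⟩)
  rw [if_neg (by simp), if_neg (by simp [Fin.ext_iff])] at h
  have hcol : ∑ i : Idx N, nu i (some ⟨m + 1, by omega⟩) = bseq nu (m + 1) + aseq nu m := by
    have := sum_nu_col nu hsp (⟨m + 1, by omega⟩ : Fin (N + 1)) (by simpa using hm)
      (M := ℝ) (fun _ => 1)
    simp only [smul_eq_mul, mul_one] at this
    rw [this, dif_pos (by simp)]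
    simp
  have hrow := sum_nu_row nu hsp (⟨m + 1, by omega⟩ : Fin (N + 1)) (by simpa using hm)
  rw [hcol, hrow] at h
  have he : (((⟨m + 1, by omega⟩ : Fin (N + 1)) : ℕ)) = m + 1 := rfl
  rw [he] at h
  linarith

include hnn in
lemma b_nonneg (k : ℕ) : 0 ≤ bseq nu k := by
  rw [bseq]; split
  · exact hnn _ _
  · exact le_rfl

include hsp hG1 hnn in
lemma one_le_a (m : ℕ) (hm : m < N) : 1 ≤ aseq nu m := by
  induction m with
  | zero =>
    rw [K2 nu hsp hG1 (by omega)]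
    have := b_nonneg nu hnn 0
    linarith
  | succ k ih =>
    rw [K3 nu hsp hG1 k hm]
    have := b_nonneg nu hnn (k + 1)
    have := ih (by omega)
    linarith

include hsp hG1 hnn in
lemma a_mono (j m : ℕ) (hj : j ≤ m) (hm : m < N) : aseq nu j ≤ aseq nu m := by
  induction m with
  | zero => interval_cases j; rfl
  | succ k ih =>
    rcases Nat.lt_or_ge j (k + 1) with h | h
    · have := ih (by omega) (by omega)
      rw [K3 nu hsp hG1 k hm]
      have := b_nonneg nu hnn (k + 1)
      linarith
    · have hjk : j = k + 1 := by omega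
      rw [hjk]

lemma Pf_zero' : Pf nu 0 = 1 := rfl

lemma Pf_gt' (j : ℕ) (h : N < j) : Pf nu j = 0 := by
  rw [Pf, if_neg (by omega), if_neg (by omega)]

lemma Pf_eq (j : ℕ) (h1 : 1 ≤ j) (h2 : j ≤ N) : Pf nu j = 1 / aseq nu (j - 1) := by
  rw [Pf, if_neg (by omega), if_pos h2]

include hsp hG1 hnn in
lemma Pf_nonneg (j : ℕ) : 0 ≤ Pf nu j := by
  rcases Nat.eq_zero_or_pos j with rfl | hj
  · rw [Pf_zero']; norm_num
  rcases Nat.lt_or_ge N j with h | h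
  · rw [Pf_gt' nu j h]
  · rw [Pf_eq nu j (by omega) (by omega)]
    have := one_le_a nu hsp hG1 hnn (j - 1) (by omega)
    positivity

include hsp hG1 hnn in
lemma Pf_anti (j : ℕ) : Pf nu (j + 1) ≤ Pf nu j := by
  rcases Nat.eq_zero_or_pos j with rfl | hj
  · by_cases hN1 : 1 ≤ N
    · rw [Pf_zero', Pf_eq nu 1 le_rfl hN1]
      have := one_le_a nu hsp hG1 hnn 0 (by omega)
      rw [div_le_one (by linarith)]; linarith
    · rw [Pf_zero', Pf_gt' nu 1 (by omega)]; norm_num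
  rcases Nat.lt_or_ge (j + 1) (N + 1) with hle | hgt
  · rw [Pf_eq nu (j + 1) (by omega) (by omega), Pf_eq nu j (by omega) (by omega)]
    have h1 := one_le_a nu hsp hG1 hnn (j - 1) (by omega)
    have h2 := a_mono nu hsp hG1 hnn (j - 1) (j + 1 - 1) (by omega) (by omega)
    exact one_div_le_one_div_of_le (by linarith) h2
  rcases Nat.lt_or_ge j (N + 1) with hle2 | hgt2
  · rw [Pf_gt' nu (j + 1) (by omega), Pf_eq nu j (by omega) (by omega)]
    have := one_le_a nu hsp hG1 hnn (j - 1) (by omega)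
    positivity
  · rw [Pf_gt' nu (j + 1) (by omega), Pf_gt' nu j (by omega)]

include hsp hG1 hnn in
lemma a_mul_Pf (t : ℕ) (h1 : 1 ≤ t) (h2 : t ≤ N) : aseq nu (t - 1) * Pf nu t = 1 := by
  rw [Pf, if_neg (by omega), if_pos h2]
  have := one_le_a nu hsp hG1 hnn (t - 1) (by omega)
  field_simp

variable {d : ℕ}

def CondW (xp yp : Idx N → Vec d) : Prop :=
  (∀ (t s : ℕ) (ht : t < N) (hs : s = N - 1 - t),
      xp (some ⟨t, by omega⟩) - xp none =
        aseq nu s • (yp (some ⟨s, by omega⟩) - yp (some (Fin.last N)))) ∧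
  xp (some (Fin.last N)) - xp none =
    yp (some 0) + yp none - (2 : ℝ) • yp (some (Fin.last N))

include hsp hG1 hnn in
lemma X_to_W (hN : 1 ≤ N) (xp yp : Idx N → Vec d) (hX : CondX (lamOf nu) xp yp) :
    CondW nu xp yp := by
  obtain ⟨hX1, hX2⟩ := hX
  constructor
  · have key : ∀ (t : ℕ) (ht : t < N), xp (some ⟨t, by omega⟩) - xp none =
        aseq nu (N - 1 - t) •
          (yp (some ⟨N - 1 - t, by omega⟩) - yp (some (Fin.last N))) := by
      intro t
      induction t with
      | zero =>
        intro ht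
        obtain ⟨k, hk⟩ : ∃ k : Fin N, (k : ℕ) = N - 1 := ⟨⟨N - 1, by omega⟩, rfl⟩
        have h := hX1 k
        rw [show k.rev.castSucc = (⟨0, by omega⟩ : Fin (N + 1)) from
          Fin.ext (by simp [Fin.val_rev, hk]; omega)] at h
        rw [show k.succ = Fin.last N from Fin.ext (by simp [hk]; omega)] at h
        rw [show k.castSucc = (⟨N - 1 - 0, by omega⟩ : Fin (N + 1)) from
          Fin.ext (by simp [hk])] at h
        rw [sum_lam_col' nu 0 (⟨0, by omega⟩ : Fin (N + 1)) rfl] at h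
        rw [dif_neg (by omega), Pf_gt' nu (N - 0 + 1) (by omega), sub_zero] at h
        simp only [add_zero] at h
        have hp : aseq nu (N - 1 - 0) * Pf nu (N - 0) = 1 :=
          a_mul_Pf nu hsp hG1 hnn N (by omega) le_rfl
        linear_combination (norm := module) (aseq nu (N - 1 - 0)) • h
          + hp • (xp none - xp (some (⟨0, by omega⟩ : Fin (N + 1))))
      | succ j ih =>
        intro ht
        obtain ⟨k, hk⟩ : ∃ k : Fin N, (k : ℕ) = N - j - 2 := ⟨⟨N - j - 2, by omega⟩, rfl⟩
        have h := hX1 k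
        rw [show k.rev.castSucc = (⟨j + 1, by omega⟩ : Fin (N + 1)) from
          Fin.ext (by simp [Fin.val_rev, hk]; omega)] at h
        rw [show k.succ = (⟨N - 1 - j, by omega⟩ : Fin (N + 1)) from
          Fin.ext (by simp [hk]; omega)] at h
        rw [show k.castSucc = (⟨N - 1 - (j + 1), by omega⟩ : Fin (N + 1)) from
          Fin.ext (by simp [hk]; omega)] at h
        rw [sum_lam_col2 nu (j + 1) j (⟨j + 1, by omega⟩ : Fin (N + 1)) rfl rfl] at h
        have ih' := ih (by omega)
        have ha1 : aseq nu (N - 1 - j) * Pf nu (N - (j + 1) + 1) = 1 := by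
          rw [show N - 1 - j = N - j - 1 by omega, show N - (j + 1) + 1 = N - j by omega]
          exact a_mul_Pf nu hsp hG1 hnn (N - j) (by omega) (by omega)
        have ha2 : aseq nu (N - 1 - (j + 1)) * Pf nu (N - (j + 1)) = 1 := by
          rw [show N - 1 - (j + 1) = N - (j + 1) - 1 by omega]
          exact a_mul_Pf nu hsp hG1 hnn (N - (j + 1)) (by omega) (by omega)
        linear_combination (norm := module) (aseq nu (N - 1 - (j + 1))) • h
          + ha2 • (xp none - xp (some (⟨j + 1, by omega⟩ : Fin (N + 1))))
          + (aseq nu (N - 1 - (j + 1)) * Pf nu (N - (j + 1) + 1)) • ih'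
          + ha1 • ((aseq nu (N - 1 - (j + 1))) •
              (yp (some (⟨N - 1 - j, by omega⟩ : Fin (N + 1))) - yp (some (Fin.last N))))
    intro t s ht hs; subst hs; exact key t ht
  · rw [Finset.sum_eq_zero (fun i _ => by rw [lam_none nu i, zero_smul]), add_zero] at hX2
    linear_combination (norm := module) (-2 : ℝ) • hX2

include hsp hG1 hnn in
lemma W_to_X (hN : 1 ≤ N) (xp yp : Idx N → Vec d) (hW : CondW nu xp yp) :
    CondX (lamOf nu) xp yp := by
  obtain ⟨hW1, hW2⟩ := hW
  constructor
  · intro k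
    by_cases hc : (k : ℕ) + 1 < N
    · rw [show k.rev.castSucc = (⟨N - 1 - (k : ℕ), by omega⟩ : Fin (N + 1)) from
        Fin.ext (by simp [Fin.val_rev]; omega)]
      rw [sum_lam_col2 nu (N - 1 - (k : ℕ)) (N - 1 - (k : ℕ) - 1)
        (⟨N - 1 - (k : ℕ), by omega⟩ : Fin (N + 1)) rfl (by omega)]
      rw [show k.succ = (⟨(k : ℕ) + 1, by omega⟩ : Fin (N + 1)) from Fin.ext (by simp)]
      rw [show k.castSucc = (⟨(k : ℕ), by omega⟩ : Fin (N + 1)) from Fin.ext (by simp)]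
      have hA := hW1 (N - 1 - (k : ℕ)) (k : ℕ) (by omega) (by omega)
      have hB := hW1 (N - 1 - (k : ℕ) - 1) ((k : ℕ) + 1) (by omega) (by omega)
      have hp1 : aseq nu (k : ℕ) * Pf nu (N - (N - 1 - (k : ℕ))) = 1 := by
        rw [show N - (N - 1 - (k : ℕ)) = (k : ℕ) + 1 by omega]
        exact a_mul_Pf nu hsp hG1 hnn ((k : ℕ) + 1) (by omega) (by omega)
      have hp2 : aseq nu ((k : ℕ) + 1) * Pf nu (N - (N - 1 - (k : ℕ)) + 1) = 1 := by
        rw [show N - (N - 1 - (k : ℕ)) + 1 = (k : ℕ) + 2 by omega]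
        exact a_mul_Pf nu hsp hG1 hnn ((k : ℕ) + 2) (by omega) (by omega)
      linear_combination (norm := module)
        (Pf nu (N - (N - 1 - (k : ℕ)))) • hA
        + hp1 • (yp (some (⟨(k : ℕ), by omega⟩ : Fin (N + 1))) - yp (some (Fin.last N)))
        - (Pf nu (N - (N - 1 - (k : ℕ)) + 1)) • hB
        + hp2 • (yp (some (Fin.last N)) - yp (some (⟨(k : ℕ) + 1, by omega⟩ : Fin (N + 1))))
    · have hkN : (k : ℕ) = N - 1 := by have := k.isLt; omega
      rw [show k.rev.castSucc = (⟨0, by omega⟩ : Fin (N + 1)) from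
        Fin.ext (by simp [Fin.val_rev, hkN]; omega)]
      rw [sum_lam_col' nu 0 (⟨0, by omega⟩ : Fin (N + 1)) rfl, dif_neg (by omega), add_zero,
        Pf_gt' nu (N - 0 + 1) (by omega), sub_zero]
      rw [show k.succ = Fin.last N from Fin.ext (by simp [hkN]; omega)]
      rw [show k.castSucc = (⟨N - 1, by omega⟩ : Fin (N + 1)) from Fin.ext (by simp [hkN])]
      have hA := hW1 0 (N - 1) (by omega) (by omega)
      have hp : aseq nu (N - 1) * Pf nu (N - 0) = 1 :=
        a_mul_Pf nu hsp hG1 hnn N (by omega) le_rfl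
      linear_combination (norm := module) (Pf nu (N - 0)) • hA
        + hp • (yp (some (⟨N - 1, by omega⟩ : Fin (N + 1))) - yp (some (Fin.last N)))
  · rw [Finset.sum_eq_zero (fun i _ => by rw [lam_none nu i, zero_smul]), add_zero]
    linear_combination (norm := module) (-(1 : ℝ) / 2) • hW2

include hsp hdiag hG1 in
lemma Y_to_W (hN : 1 ≤ N) (xp yp : Idx N → Vec d) (hY : CondY nu xp yp) :
    CondW nu xp yp := by
  obtain ⟨hY1, hY2, hY3⟩ := hY
  constructor
  · have key : ∀ (t : ℕ) (ht : t < N), xp (some ⟨t, by omega⟩) - xp none =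
        aseq nu (N - 1 - t) •
          (yp (some ⟨N - 1 - t, by omega⟩) - yp (some (Fin.last N))) := by
      intro t
      induction t with
      | zero =>
        intro ht
        have h := hY2
        rw [sum_nu_colN nu hsp hdiag hN] at h
        rw [show (0 : Fin (N + 1)) = (⟨0, by omega⟩ : Fin (N + 1)) from
          Fin.ext (by simp)] at h
        exact h
      | succ j ih =>
        intro ht
        have h := hY1 ⟨j, by omega⟩ (by simpa using ht)
        rw [show (⟨j, by omega⟩ : Fin N).rev.castSucc = (⟨N - 1 - j, by omega⟩ : Fin (N + 1))
          from Fin.ext (by simp [Fin.val_rev]; omega)] at h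
        rw [show (⟨j, by omega⟩ : Fin N).succ = (⟨j + 1, by omega⟩ : Fin (N + 1)) from
          Fin.ext (by simp)] at h
        rw [show (⟨j, by omega⟩ : Fin N).castSucc = (⟨j, by omega⟩ : Fin (N + 1)) from
          Fin.ext (by simp)] at h
        rw [sum_nu_col2 nu hsp (N - 1 - j) (N - 1 - (j + 1))
          (⟨N - 1 - j, by omega⟩ : Fin (N + 1)) rfl (by omega) (by omega)] at h
        have ih' := ih (by omega)
        have hK : aseq nu (N - 1 - j) = aseq nu (N - 1 - (j + 1)) + bseq nu (N - 1 - j) := by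
          have h3 := K3 nu hsp hG1 (N - 1 - (j + 1)) (by omega)
          rw [show N - 1 - (j + 1) + 1 = N - 1 - j by omega] at h3
          exact h3
        linear_combination (norm := module) h + ih'
          + hK • (yp (some (⟨N - 1 - j, by omega⟩ : Fin (N + 1))) - yp (some (Fin.last N)))
    intro t s ht hs; subst hs; exact key t ht
  · have h := hY3
    rw [sum_nu_colstar nu hsp hdiag, c_eq_one nu hsp hdiag hG1, one_smul] at h
    linear_combination (norm := module) (-2 : ℝ) • h

include hsp hdiag hG1 in
lemma W_to_Y (hN : 1 ≤ N) (xp yp : Idx N → Vec d) (hW : CondW nu xp yp) :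
    CondY nu xp yp := by
  obtain ⟨hW1, hW2⟩ := hW
  refine ⟨?_, ?_, ?_⟩
  · intro k hc
    rw [show k.rev.castSucc = (⟨N - 1 - (k : ℕ), by omega⟩ : Fin (N + 1)) from
      Fin.ext (by simp [Fin.val_rev]; omega)]
    rw [sum_nu_col2 nu hsp (N - 1 - (k : ℕ)) (N - 1 - (k : ℕ) - 1)
      (⟨N - 1 - (k : ℕ), by omega⟩ : Fin (N + 1)) rfl (by omega) (by omega)]
    rw [show k.succ = (⟨(k : ℕ) + 1, by omega⟩ : Fin (N + 1)) from Fin.ext (by simp)]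
    rw [show k.castSucc = (⟨(k : ℕ), by omega⟩ : Fin (N + 1)) from Fin.ext (by simp)]
    have hA := hW1 ((k : ℕ) + 1) (N - 1 - (k : ℕ) - 1) (by omega) (by omega)
    have hB := hW1 (k : ℕ) (N - 1 - (k : ℕ)) (by omega) rfl
    have hK : aseq nu (N - 1 - (k : ℕ)) =
        aseq nu (N - 1 - (k : ℕ) - 1) + bseq nu (N - 1 - (k : ℕ)) := by
      have h3 := K3 nu hsp hG1 (N - 1 - (k : ℕ) - 1) (by omega)
      rw [show N - 1 - (k : ℕ) - 1 + 1 = N - 1 - (k : ℕ) by omega] at h3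
      exact h3
    linear_combination (norm := module) hA - hB
      + hK • (yp (some (Fin.last N)) - yp (some (⟨N - 1 - (k : ℕ), by omega⟩ : Fin (N + 1))))
  · rw [sum_nu_colN nu hsp hdiag hN]
    rw [show (0 : Fin (N + 1)) = (⟨0, by omega⟩ : Fin (N + 1)) from Fin.ext (by simp)]
    exact hW1 0 (N - 1) (by omega) (by omega)
  · rw [sum_nu_colstar nu hsp hdiag, c_eq_one nu hsp hdiag hG1, one_smul]
    linear_combination (norm := module) (-(1 : ℝ) / 2) • hW2

lemma lam_row_some (m : Fin (N + 1)) :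
    ∑ j : Idx N, lamOf nu (some m) j = if (m : ℕ) < N then Pf nu (N - (m : ℕ)) else 0 := by
  rw [Fintype.sum_option, lam_none, zero_add]
  split
  next h =>
    rw [Finset.sum_eq_single (⟨(m : ℕ) + 1, by omega⟩ : Fin (N + 1))]
    · exact if_pos rfl
    · intro j _ hj
      exact if_neg (fun hc => hj (Fin.ext (by simp; omega)))
    · intro h; exact absurd (Finset.mem_univ _) h
  next h =>
    apply Finset.sum_eq_zero
    intro j _
    exact if_neg (by omega)

lemma lam_row_none : ∑ j : Idx N, lamOf nu none j = 1 := by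
  rw [Fintype.sum_option, lam_none, zero_add]
  show ∑ i : Fin (N + 1), (Pf nu (N - (i : ℕ)) - Pf nu (N - (i : ℕ) + 1)) = 1
  rw [Fin.sum_univ_eq_sum_range (fun t => Pf nu (N - t) - Pf nu (N - t + 1)) (N + 1)]
  have e : ∀ i ∈ Finset.range (N + 1),
      Pf nu (N - i) - Pf nu (N - i + 1) =
        (fun i => Pf nu (N + 1 - i)) (i + 1) - (fun i => Pf nu (N + 1 - i)) i := by
    intro i hi
    have hi' : i < N + 1 := Finset.mem_range.mp hi
    simp only
    congr 2 <;> omega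
  rw [Finset.sum_congr rfl e, Finset.sum_range_sub (fun i => Pf nu (N + 1 - i)) (N + 1)]
  show Pf nu (N + 1 - (N + 1)) - Pf nu (N + 1 - 0) = 1
  rw [show N + 1 - (N + 1) = 0 by omega, Pf_zero', Pf_gt' nu (N + 1 - 0) (by omega)]
  norm_num

lemma lam_col_none_sum : ∑ i : Idx N, lamOf nu i none = 0 :=
  Finset.sum_eq_zero (fun i _ => lam_none nu i)

include hsp hG1 hnn in
lemma F1_lam (hN : 1 ≤ N) : CondF1 (lamOf nu) := by
  intro k
  rcases k with _ | m
  · rw [if_neg (show ¬ (none : Idx N) = some (Fin.last N) from fun h => nomatch h),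
      if_pos rfl, lam_col_none_sum, lam_row_none, zero_sub]
  · have hc : ∑ i : Idx N, lamOf nu i (some m) =
        (Pf nu (N - (m : ℕ)) - Pf nu (N - (m : ℕ) + 1)) +
          (if 1 ≤ (m : ℕ) then Pf nu (N - (m : ℕ) + 1) else 0) := by
      have := sum_lam_col nu m (M := ℝ) (fun _ => 1)
      simpa using this
    rw [hc, lam_row_some nu m]
    by_cases hmN : (m : ℕ) = N
    · rw [if_pos (show 1 ≤ (m : ℕ) by omega), if_neg (show ¬ (m : ℕ) < N by omega),
        if_pos (show (some m : Idx N) = some (Fin.last N) from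
          congrArg some (Fin.ext (by simp [hmN])))]
      rw [hmN, Nat.sub_self, Pf_zero']
      ring
    · rw [if_pos (show (m : ℕ) < N by omega),
        if_neg (show ¬ (some m : Idx N) = some (Fin.last N) by
          simp only [Option.some.injEq, Fin.ext_iff, Fin.val_last]; omega),
        if_neg (show ¬ (some m : Idx N) = none from fun h => nomatch h)]
      by_cases hm0 : 1 ≤ (m : ℕ)
      · rw [if_pos hm0]; ring
      · rw [if_neg hm0]
        have h0 : (m : ℕ) = 0 := by omega
        rw [h0, Pf_gt' nu (N - 0 + 1) (by omega)]
        ring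

lemma relF_lam (i j : Idx N) (h : ¬ RelF N i j) : lamOf nu i j = 0 := by
  rcases j with _ | j'
  · exact lam_none nu i
  · rcases i with _ | i'
    · exact absurd (Or.inr ⟨j', rfl, rfl⟩) h
    · show (if (i' : ℕ) + 1 = (j' : ℕ) then Pf nu (N - (i' : ℕ)) else 0) = 0
      split
      next h1 =>
        exfalso
        apply h
        left
        refine ⟨⟨(i' : ℕ), by omega⟩, congrArg some (Fin.ext (by simp)),
          congrArg some (Fin.ext (by simp; omega))⟩
      next => rfl

end RX
end RXsec

/-- **Relaxed multiplier correspondence, direction (i) (Lemma relaxed, part i).**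
If nonnegative multipliers `ν` (zero diagonal) satisfy `(G1)` and the sparsity pattern
`(relaxed-g)`, then there exist nonnegative multipliers `λ` (zero diagonal) satisfying
`(F1)` and the sparsity pattern `(relaxed-f)` such that, for all points, condition `(X_λ)`
holds if and only if condition `(Y_ν)` holds. -/
theorem relaxed_correspondence_g_to_f
    (d N : ℕ) (hd : 1 ≤ d) (hN : 1 ≤ N)
    (nu : Idx N → Idx N → ℝ) (hnn : ∀ i j, 0 ≤ nu i j) (hdiag : ∀ i, nu i i = 0)
    (hG1 : CondG1 nu) (hsp : ∀ i j : Idx N, ¬ RelG N i j → nu i j = 0) :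
    ∃ lam : Idx N → Idx N → ℝ,
      (∀ i j, 0 ≤ lam i j) ∧ (∀ i, lam i i = 0) ∧ CondF1 lam ∧
      (∀ i j : Idx N, ¬ RelF N i j → lam i j = 0) ∧
      ∀ xp yp : Idx N → Vec d, CondX lam xp yp ↔ CondY nu xp yp := by
  classical
  refine ⟨RX.lamOf nu, ?_, ?_, ?_, ?_, ?_⟩
  · intro i j
    rcases j with _ | j'
    · rw [RX.lam_none]
    · rcases i with _ | i'
      · show (0 : ℝ) ≤ RX.Pf nu (N - (j' : ℕ)) - RX.Pf nu (N - (j' : ℕ) + 1)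
        have := RX.Pf_anti nu hsp hG1 hnn (N - (j' : ℕ))
        linarith
      · show (0 : ℝ) ≤ if (i' : ℕ) + 1 = (j' : ℕ) then RX.Pf nu (N - (i' : ℕ)) else 0
        split
        · exact RX.Pf_nonneg nu hsp hG1 hnn _
        · exact le_rfl
  · intro i
    rcases i with _ | i'
    · rfl
    · show (if (i' : ℕ) + 1 = (i' : ℕ) then RX.Pf nu (N - (i' : ℕ)) else 0) = 0
      rw [if_neg (by omega)]
  · exact RX.F1_lam nu hsp hG1 hnn hN
  · exact fun i j h => RX.relF_lam nu i j h
  · intro xp yp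
    constructor
    · intro hX
      exact RX.W_to_Y nu hsp hdiag hG1 hN xp yp (RX.X_to_W nu hsp hG1 hnn hN xp yp hX)
    · intro hY
      exact RX.W_to_X nu hsp hG1 hnn hN xp yp (RX.Y_to_W nu hsp hdiag hG1 hN xp yp hY)
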